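/- Let (K, {Fᵢ}₁ᴺ) be a self-similar set with contraction ratio tuple θ ∈ (0,1)^N, and let ζ ∈ (0,1)^N. Suppose there exists C > 0 such that for all r ∈ (0,1) and all non-empty words v, w ∈ Λ_θ(r) with K_v ∩ K_w ≠ ∅, one has C⁻¹ζ_v ≤ ζ_w ≤ Cζ_v. Then ζ satisfies the average condition (AV_θ): there exist positive constants C', C'' such that for all non-empty finite words v, w with θ_w ≤ C'θ_v and K_v ∩ K_w ≠ ∅, one has ζ_w ≤ C''ζ_v. -/

import Mathlib

namespace SSS

/-- The weight of a finite word: the product of the tuple entries along the word. -/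
def wt {N : ℕ} (θ : Fin N → ℝ) (w : List (Fin N)) : ℝ := (w.map θ).prod

/-- The partition `Λ_θ(r)`: non-empty words `w` with `θ_w ≤ r < θ_w / θ_{w_last}`. -/
def partition {N : ℕ} (θ : Fin N → ℝ) (r : ℝ) : Set (List (Fin N)) :=
  {w | ∃ h : w ≠ [], wt θ w ≤ r ∧ r < wt θ w / θ (w.getLast h)}

/-- The iterated map `F_w = F_{w₁} ∘ ⋯ ∘ F_{wₙ}`. -/
def Fword {M : Type*} {N : ℕ} (F : Fin N → M → M) : List (Fin N) → M → M
  | [] => id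
  | i :: w => F i ∘ Fword F w

/-- The cell `K_w = F_w(K)`. -/
def cell {M : Type*} {N : ℕ} (F : Fin N → M → M) (K : Set M)
    (w : List (Fin N)) : Set M := Fword F w '' K

lemma wt_nil {N : ℕ} (θ : Fin N → ℝ) : wt θ [] = 1 := rfl

lemma wt_cons {N : ℕ} (θ : Fin N → ℝ) (i : Fin N) (w : List (Fin N)) :
    wt θ (i :: w) = θ i * wt θ w := by simp [wt]

lemma wt_append {N : ℕ} (θ : Fin N → ℝ) (a b : List (Fin N)) :
    wt θ (a ++ b) = wt θ a * wt θ b := by simp [wt]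

lemma wt_pos {N : ℕ} {θ : Fin N → ℝ} (hθ : ∀ i, θ i ∈ Set.Ioo (0 : ℝ) 1)
    (w : List (Fin N)) : 0 < wt θ w := by
  induction w with
  | nil => norm_num [wt_nil]
  | cons i u ih => rw [wt_cons]; exact mul_pos (hθ i).1 ih

lemma wt_le_one {N : ℕ} {θ : Fin N → ℝ} (hθ : ∀ i, θ i ∈ Set.Ioo (0 : ℝ) 1)
    (w : List (Fin N)) : wt θ w ≤ 1 := by
  induction w with
  | nil => norm_num [wt_nil]
  | cons i u ih =>
    rw [wt_cons]
    exact mul_le_one₀ (hθ i).2.le (wt_pos hθ u).le ih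

lemma wt_lt_one {N : ℕ} {θ : Fin N → ℝ} (hθ : ∀ i, θ i ∈ Set.Ioo (0 : ℝ) 1)
    {w : List (Fin N)} (hw : w ≠ []) : wt θ w < 1 := by
  cases w with
  | nil => exact absurd rfl hw
  | cons i u =>
    rw [wt_cons]
    calc θ i * wt θ u ≤ θ i * 1 :=
          mul_le_mul_of_nonneg_left (wt_le_one hθ u) (hθ i).1.le
      _ < 1 := by simpa using (hθ i).2

lemma Fword_append {M : Type*} {N : ℕ} (F : Fin N → M → M) (a b : List (Fin N)) :
    Fword F (a ++ b) = Fword F a ∘ Fword F b := by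
  induction a with
  | nil => rfl
  | cons i u ih => simp [Fword, ih, Function.comp_assoc]

lemma Fword_image_subset {M : Type*} {N : ℕ} (F : Fin N → M → M) (K : Set M)
    (hself : K = ⋃ i, F i '' K) (w : List (Fin N)) : Fword F w '' K ⊆ K := by
  induction w with
  | nil => simp [Fword]
  | cons i u ih =>
    have h1 : F i '' K ⊆ K := by
      conv_rhs => rw [hself]
      exact Set.subset_iUnion (fun j => F j '' K) i
    calc Fword F (i :: u) '' K = F i '' (Fword F u '' K) :=
          Set.image_comp (F i) (Fword F u) K
      _ ⊆ F i '' K := Set.image_mono ih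
      _ ⊆ K := h1

lemma cell_append_subset {M : Type*} {N : ℕ} (F : Fin N → M → M) (K : Set M)
    (hself : K = ⋃ i, F i '' K) (a b : List (Fin N)) :
    cell F K (a ++ b) ⊆ cell F K a := by
  unfold cell
  rw [Fword_append, Set.image_comp]
  exact Set.image_mono (Fword_image_subset F K hself b)

/-- any nonempty word with weight `≤ r < 1` has a prefix in the partition. -/
lemma exists_prefix_partition {N : ℕ} {θ : Fin N → ℝ}
    (hθ : ∀ i, θ i ∈ Set.Ioo (0 : ℝ) 1) :
    ∀ (w : List (Fin N)), w ≠ [] → ∀ r : ℝ, wt θ w ≤ r → r < 1 →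
      ∃ w' t, w = w' ++ t ∧ w' ∈ partition θ r := by
  intro w
  induction w with
  | nil => intro h; exact absurd rfl h
  | cons i u ih =>
    intro _ r hwr hr1
    by_cases hi : θ i ≤ r
    · refine ⟨[i], u, rfl, ?_⟩
      refine ⟨by simp, by simpa [wt] using hi, ?_⟩
      have hwi : wt θ [i] = θ i := by simp [wt]
      have : wt θ [i] / θ ([i].getLast (by simp)) = 1 := by
        simp [hwi, div_self (hθ i).1.ne']
      rw [this]; exact hr1
    · push_neg at hi
      have hu : u ≠ [] := by
        rintro rfl
        rw [wt_cons, wt_nil, mul_one] at hwr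
        exact absurd hwr (not_le.mpr hi)
      have hθi := (hθ i).1
      have hur : wt θ u ≤ r / θ i := by
        rw [le_div_iff₀ hθi, mul_comm]
        rwa [wt_cons] at hwr
      have hr1' : r / θ i < 1 := (div_lt_one hθi).mpr hi
      obtain ⟨u', t, hsplit, hne', h1, h2⟩ := ih hu (r / θ i) hur hr1'
      have hu'ne : u' ≠ [] := hne'
      refine ⟨i :: u', t, by rw [hsplit]; rfl, ⟨by simp, ?_, ?_⟩⟩
      · rw [wt_cons, ← le_div_iff₀' hθi]; exact h1
      · have hlast : (i :: u').getLast (by simp) = u'.getLast hu'ne :=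
          List.getLast_cons hu'ne
        rw [hlast, wt_cons, mul_div_assoc, ← div_lt_iff₀' hθi]
        exact h2

lemma self_mem_partition {N : ℕ} {θ : Fin N → ℝ}
    (hθ : ∀ i, θ i ∈ Set.Ioo (0 : ℝ) 1) {v : List (Fin N)} (hv : v ≠ []) :
    v ∈ partition θ (wt θ v) := by
  refine ⟨hv, le_refl _, ?_⟩
  have h1 : 0 < θ (v.getLast hv) := (hθ _).1
  rw [lt_div_iff₀ h1]
  calc wt θ v * θ (v.getLast hv) < wt θ v * 1 := by
        exact mul_lt_mul_of_pos_left (hθ _).2 (wt_pos hθ v)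
    _ = wt θ v := mul_one _

/-- if the `ζ`-weights of intersecting cells in any common partition
`Λ_θ(r)` are comparable, then `ζ` satisfies the average condition `(AV_θ)`. -/
theorem average_condition_of_partition_comparability
    {M : Type*} [MetricSpace M] {N : ℕ}
    (F : Fin N → M → M) (θ ζ : Fin N → ℝ)
    (hθ : ∀ i, θ i ∈ Set.Ioo (0 : ℝ) 1) (hζ : ∀ i, ζ i ∈ Set.Ioo (0 : ℝ) 1)
    (hcontr : ∀ i, ∀ x y : M, dist (F i x) (F i y) ≤ θ i * dist x y)
    (K : Set M) (hKne : K.Nonempty) (hKcomp : IsCompact K)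
    (hself : K = ⋃ i, F i '' K)
    (C : ℝ) (hC : 0 < C)
    (hcomp : ∀ r : ℝ, r ∈ Set.Ioo (0 : ℝ) 1 → ∀ v w : List (Fin N),
      v ∈ partition θ r → w ∈ partition θ r →
      (cell F K v ∩ cell F K w).Nonempty →
      C⁻¹ * wt ζ v ≤ wt ζ w ∧ wt ζ w ≤ C * wt ζ v) :
    ∃ C' > (0 : ℝ), ∃ C'' > (0 : ℝ), ∀ v w : List (Fin N), v ≠ [] → w ≠ [] →
      wt θ w ≤ C' * wt θ v → (cell F K v ∩ cell F K w).Nonempty →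
      wt ζ w ≤ C'' * wt ζ v := by
  refine ⟨1, one_pos, C, hC, ?_⟩
  intro v w hv hw hwle hint
  rw [one_mul] at hwle
  set r := wt θ v with hr
  have hr01 : r ∈ Set.Ioo (0 : ℝ) 1 := ⟨wt_pos hθ v, wt_lt_one hθ hv⟩
  -- prefix of w in the partition
  obtain ⟨w', t, hsplit, hw'mem⟩ := exists_prefix_partition hθ w hw r hwle hr01.2
  have hvmem : v ∈ partition θ r := self_mem_partition hθ hv
  -- cells intersect
  have hint' : (cell F K v ∩ cell F K w').Nonempty := by
    obtain ⟨x, hx1, hx2⟩ := hint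
    exact ⟨x, hx1, cell_append_subset F K hself w' t (hsplit ▸ hx2)⟩
  have hcc := (hcomp r hr01 v w' hvmem hw'mem hint').2
  -- ζ_w ≤ ζ_{w'}
  have hwt : wt ζ w ≤ wt ζ w' := by
    rw [hsplit, wt_append]
    calc wt ζ w' * wt ζ t ≤ wt ζ w' * 1 :=
          mul_le_mul_of_nonneg_left (wt_le_one hζ t) (wt_pos hζ w').le
      _ = wt ζ w' := mul_one _
  exact hwt.trans hcc

end SSS
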